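/- Let H be a graph of minimum degree 3, let (G,γ) be a signed graph, and let G' be the graph obtained from G by subdividing every even edge exactly once. Then (G,γ) contains (H,γ₁) as a signed graph minor if and only if G' contains H as an odd-minor. -/

import Mathlib

namespace TDMPaper

/-- A finite multigraph without loops: edges carry their unordered pair of endpoints. -/
structure MGraph where
  V : Type
  E : Type
  finV : Finite V
  finE : Finite E
  ends : E → Sym2 V
  loopless : ∀ e, ¬ (ends e).IsDiag

attribute [instance] MGraph.finV MGraph.finE

namespace MGraph

/-- A cycle in a multigraph, given by cyclically ordered distinct vertices and
distinct edges. -/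
structure Cycle (G : MGraph) where
  n : ℕ
  npos : 0 < n
  vtx : Fin n → G.V
  edge : Fin n → G.E
  vtx_inj : Function.Injective vtx
  edge_inj : Function.Injective edge
  ends_eq : ∀ i : Fin n,
    G.ends (edge i) = s(vtx i, vtx ⟨(i.1 + 1) % n, Nat.mod_lt _ npos⟩)

/-- The parity of a cycle with respect to a signing `γ`. -/
def Cycle.parity {G : MGraph} (C : G.Cycle) (γ : G.E → ZMod 2) : ZMod 2 :=
  ∑ i, γ (C.edge i)

/-- The vertex set of a cycle. -/
def Cycle.support {G : MGraph} (C : G.Cycle) : Set G.V := Set.range C.vtx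

/-- The odd cycle packing number of a signed graph: the maximum number of pairwise
vertex-disjoint odd cycles. -/
noncomputable def OCP (G : MGraph) (γ : G.E → ZMod 2) : ℕ :=
  sSup {k : ℕ | ∃ C : Fin k → G.Cycle,
    (∀ i, (C i).parity γ = 1) ∧
    ∀ i j, i ≠ j → Disjoint ((C i).support) ((C j).support)}

/-- The subgraph induced by a vertex set `S` (kept on the same vertex type; only
edges with both endpoints in `S` survive). -/
def induce (G : MGraph) (S : Set G.V) : MGraph where
  V := G.V
  E := {e : G.E // ∀ v ∈ G.ends e, v ∈ S}
  finV := G.finV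
  finE := inferInstance
  ends := fun e => G.ends e.1
  loopless := fun e => G.loopless e.1

/-- The odd cycle packing number of the subgraph induced on `S`, signs inherited. -/
noncomputable def OCPOn (G : MGraph) (γ : G.E → ZMod 2) (S : Set G.V) : ℕ :=
  (G.induce S).OCP (fun e => γ e.1)

/-- A path in a multigraph. -/
structure Path (G : MGraph) where
  n : ℕ
  vtx : Fin (n + 1) → G.V
  edge : Fin n → G.E
  vtx_inj : Function.Injective vtx
  ends_eq : ∀ i : Fin n, G.ends (edge i) = s(vtx i.castSucc, vtx i.succ)

def Path.first {G : MGraph} (P : G.Path) : G.V := P.vtx 0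
def Path.last {G : MGraph} (P : G.Path) : G.V := P.vtx (Fin.last P.n)
def Path.support {G : MGraph} (P : G.Path) : Set G.V := Set.range P.vtx
def Path.internals {G : MGraph} (P : G.Path) : Set G.V :=
  P.support \ {P.first, P.last}
def Path.parity {G : MGraph} (P : G.Path) (γ : G.E → ZMod 2) : ZMod 2 :=
  ∑ i, γ (P.edge i)

end MGraph

open MGraph

/-- `γ'` is obtained from `γ` by a sequence of shiftings at vertices. -/
def IsShift (G : MGraph) (γ γ' : G.E → ZMod 2) : Prop :=
  ∃ σ : G.V → ZMod 2, ∀ e u v, G.ends e = s(u, v) → γ' e = γ e + σ u + σ v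

/-- A minor model of `H` in `G`: disjoint nonempty connected branch sets and an
injective assignment of edges. -/
structure MinorModel (H G : MGraph) where
  bs : H.V → Set G.V
  em : H.E → G.E
  bs_nonempty : ∀ v, (bs v).Nonempty
  bs_disjoint : ∀ u v, u ≠ v → Disjoint (bs u) (bs v)
  bs_connected : ∀ v, ∀ a ∈ bs v, ∀ b ∈ bs v,
    Relation.ReflTransGen
      (fun x y => x ∈ bs v ∧ y ∈ bs v ∧ ∃ e, G.ends e = s(x, y)) a b
  em_inj : Function.Injective em
  em_ends : ∀ eH u v, H.ends eH = s(u, v) →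
    ∃ a ∈ bs u, ∃ b ∈ bs v, G.ends (em eH) = s(a, b)

/-- `H` is a minor of `G`. -/
def IsMinor (H G : MGraph) : Prop := Nonempty (MinorModel H G)

/-- `(H,KH)` is a rooted minor of `(G,KG)`: there is a minor model in which the
branch set of every root of `H` contains a root of `G`. -/
def IsRootedMinor (H : MGraph) (KH : Set H.V) (G : MGraph) (KG : Set G.V) : Prop :=
  ∃ M : MinorModel H G, ∀ v ∈ KH, (M.bs v ∩ KG).Nonempty

/-- A signed minor model of `(H,γH)` in `(G,γG)`: after shifting, branch sets are
connected through even edges and edges of `H` get edges of `G` of the correct sign. -/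
structure SignedMinorModel (H G : MGraph) (γH : H.E → ZMod 2) (γG : G.E → ZMod 2) where
  γ' : G.E → ZMod 2
  shift : IsShift G γG γ'
  bs : H.V → Set G.V
  em : H.E → G.E
  bs_nonempty : ∀ v, (bs v).Nonempty
  bs_disjoint : ∀ u v, u ≠ v → Disjoint (bs u) (bs v)
  bs_connected : ∀ v, ∀ a ∈ bs v, ∀ b ∈ bs v,
    Relation.ReflTransGen
      (fun x y => x ∈ bs v ∧ y ∈ bs v ∧ ∃ e, γ' e = 0 ∧ G.ends e = s(x, y)) a b
  em_inj : Function.Injective em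
  em_ends : ∀ eH u v, H.ends eH = s(u, v) →
    ∃ a ∈ bs u, ∃ b ∈ bs v, G.ends (em eH) = s(a, b)
  em_parity : ∀ eH, γ' (em eH) = γH eH

/-- `(H,γH)` is a signed graph minor of `(G,γG)`. -/
def IsSignedMinor (H : MGraph) (γH : H.E → ZMod 2) (G : MGraph)
    (γG : G.E → ZMod 2) : Prop :=
  Nonempty (SignedMinorModel H G γH γG)

/-- `(H,γH,KH)` is a rooted signed graph minor of `(G,γG,KG)`. -/
def IsRootedSignedMinor (H : MGraph) (γH : H.E → ZMod 2) (KH : Set H.V)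
    (G : MGraph) (γG : G.E → ZMod 2) (KG : Set G.V) : Prop :=
  ∃ M : SignedMinorModel H G γH γG, ∀ v ∈ KH, (M.bs v ∩ KG).Nonempty

/-- An odd minor model of `H` in `G`: a minor model together with a 2-colouring of
`G` which is proper on each branch set (branch sets are connected through
bichromatic edges) and for which every model edge is monochromatic. -/
structure OddMinorModel (H G : MGraph) where
  bs : H.V → Set G.V
  em : H.E → G.E
  col : G.V → ZMod 2
  bs_nonempty : ∀ v, (bs v).Nonempty
  bs_disjoint : ∀ u v, u ≠ v → Disjoint (bs u) (bs v)
  bs_connected : ∀ v, ∀ a ∈ bs v, ∀ b ∈ bs v,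
    Relation.ReflTransGen
      (fun x y => x ∈ bs v ∧ y ∈ bs v ∧ col x ≠ col y ∧ ∃ e, G.ends e = s(x, y)) a b
  em_inj : Function.Injective em
  em_ends : ∀ eH u v, H.ends eH = s(u, v) →
    ∃ a ∈ bs u, ∃ b ∈ bs v, G.ends (em eH) = s(a, b)
  em_mono : ∀ eH u v, G.ends (em eH) = s(u, v) → col u = col v

/-- `G` contains `H` as an odd-minor. -/
def IsOddMinor (H G : MGraph) : Prop := Nonempty (OddMinorModel H G)

/-- `(G,γG)` contains `(H,γH)` as a subdivision. -/
def IsSignedSubdivision (H : MGraph) (γH : H.E → ZMod 2) (G : MGraph)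
    (γG : G.E → ZMod 2) : Prop :=
  ∃ (γH' : H.E → ZMod 2) (_ : IsShift H γH γH')
    (φV : H.V → G.V) (φE : H.E → G.Path),
    Function.Injective φV ∧
    (∀ eH u v, H.ends eH = s(u, v) →
      s((φE eH).first, (φE eH).last) = s(φV u, φV v)) ∧
    (∀ eH, (φE eH).parity γG = γH' eH) ∧
    (∀ e e', e ≠ e' → Disjoint ((φE e).internals) ((φE e').support)) ∧
    (∀ e, Disjoint ((φE e).internals) (Set.range φV))

/-! ## Tree decompositions and width parameters -/

/-- A tree decomposition of a multigraph. -/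
structure TreeDecomp (G : MGraph) where
  ι : Type
  tree : SimpleGraph ι
  isTree : tree.IsTree
  bag : ι → Set G.V
  covers_vertex : ∀ v, ∃ t, v ∈ bag t
  covers_edge : ∀ e, ∃ t, ∀ v ∈ G.ends e, v ∈ bag t
  bag_connected : ∀ v, (tree.induce {t | v ∈ bag t}).Connected

/-- A node of a tree is a leaf if it has at most one neighbour. -/
def IsLeaf {ι : Type} (T : SimpleGraph ι) (t : ι) : Prop :=
  (T.neighborSet t).Subsingleton

/-- A tree `K`-free-decomposition. -/
structure KFreeDecomp (G : MGraph) (K : Set G.V) extends TreeDecomp G where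
  L : Set G.V
  L_disj : Disjoint L K
  unique_bag : ∀ v ∈ L, ∃! t, v ∈ bag t
  leaf_bag : ∀ v ∈ L, ∀ t, v ∈ bag t → IsLeaf tree t

/-- The width of a tree `K`-free-decomposition: `max {0, max_t |β(t)\L| - 1}`. -/
noncomputable def KFreeDecomp.width {G : MGraph} {K : Set G.V}
    (D : KFreeDecomp G K) : ℕ :=
  ⨆ t : D.ι, ((D.bag t \ D.L).ncard - 1)

/-- The `K`-free treewidth of `(G,K)`. -/
noncomputable def twK (G : MGraph) (K : Set G.V) : ℕ :=
  sInf {w | ∃ D : KFreeDecomp G K, D.width = w}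

/-- A tame OCP-tree-decomposition of a signed graph. -/
structure TameOCPDecomp (G : MGraph) (γ : G.E → ZMod 2) extends TreeDecomp G where
  prot : ι → Set G.V
  prot_sub : ∀ t, prot t ⊆ bag t
  prot_adh : ∀ t t', tree.Adj t t' → ((bag t ∩ bag t') \ prot t).ncard ≤ 1

/-- The tame width (t-width) of a tame OCP-tree-decomposition. -/
noncomputable def TameOCPDecomp.twidth {G : MGraph} {γ : G.E → ZMod 2}
    (D : TameOCPDecomp G γ) : ℕ :=
  ⨆ t : D.ι, ((D.prot t).ncard + G.OCPOn γ (D.bag t \ D.prot t))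

/-- The tame OCP-treewidth of a signed graph. -/
noncomputable def tOCPtw (G : MGraph) (γ : G.E → ZMod 2) : ℕ :=
  sInf {w | ∃ D : TameOCPDecomp G γ, D.twidth = w}

/-- A TDM-tree-decomposition of a rooted signed graph. -/
structure TDMDecomp (G : MGraph) (γ : G.E → ZMod 2) (K : Set G.V)
    extends TreeDecomp G where
  prot : ι → Set G.V
  J : Set ι
  J_subtree : J.Nonempty → (tree.induce J).Connected
  prot_sub : ∀ t, prot t ⊆ bag t
  prot_roots : ∀ t, K ∩ bag t ⊆ prot t
  prot_adh : ∀ t t', tree.Adj t t' → ((bag t ∩ bag t') \ prot t).ncard ≤ 1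
  strong : ∀ t ∈ J, ∀ t', tree.Adj t t' → bag t ∩ bag t' ⊆ prot t
  roots_in_J : K ⊆ ⋃ j ∈ J, bag j

/-- The width of a TDM-tree-decomposition. -/
noncomputable def TDMDecomp.width {G : MGraph} {γ : G.E → ZMod 2} {K : Set G.V}
    (D : TDMDecomp G γ K) : ℕ :=
  ⨆ t : D.ι, ((D.prot t).ncard + G.OCPOn γ (D.bag t \ D.prot t))

/-- The TDM-treewidth of a rooted signed graph. -/
noncomputable def TDMtw (G : MGraph) (γ : G.E → ZMod 2) (K : Set G.V) : ℕ :=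
  sInf {w | ∃ D : TDMDecomp G γ K, D.width = w}

/-! ## Grids, parity handles, parity vortices -/

/-- Adjacency of the grid, on `ℕ × ℕ` coordinates. -/
def gridAdj (a b : ℕ × ℕ) : Prop :=
  (a.1 = b.1 ∧ (a.2 + 1 = b.2 ∨ b.2 + 1 = a.2)) ∨
  (a.2 = b.2 ∧ (a.1 + 1 = b.1 ∨ b.1 + 1 = a.1))

/-- The `k × k` grid. -/
def gridGraph (k : ℕ) : MGraph where
  V := Fin k × Fin k
  E := {e : Sym2 (Fin k × Fin k) //
    ∃ a b : Fin k × Fin k, gridAdj (a.1.1, a.2.1) (b.1.1, b.2.1) ∧ e = s(a, b)}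
  finV := inferInstance
  finE := inferInstance
  ends := Subtype.val
  loopless := fun e he => by
    obtain ⟨a, b, hab, h⟩ := e.2
    rw [h, Sym2.mk_isDiag_iff] at he
    subst he
    rcases hab with ⟨_, h' | h'⟩ | ⟨_, h' | h'⟩ <;> omega

/-- The first row of the `k × k` grid. -/
def firstRow (k : ℕ) : Set (gridGraph k).V := {p : Fin k × Fin k | p.1.1 = 0}

/-- The `i`-th designated vertex `x_i` on the outer face of the cylindrical
`(k × 4k)`-grid (every other vertex, `0`-indexed). -/
def xvtx (k : ℕ) (i : Fin (2 * k)) : Fin k × Fin (4 * k) :=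
  (⟨0, by have := i.2; omega⟩, ⟨2 * i.1, by have := i.2; omega⟩)

/-- Adjacency of the cylindrical `(k × 4k)`-grid `P_k □ C_{4k}`. -/
def cylAdj (k : ℕ) (a b : Fin k × Fin (4 * k)) : Prop :=
  (a.1 = b.1 ∧ (a.2.1 + 1 = b.2.1 ∨ b.2.1 + 1 = a.2.1 ∨
    (a.2.1 = 0 ∧ b.2.1 + 1 = 4 * k) ∨ (b.2.1 = 0 ∧ a.2.1 + 1 = 4 * k))) ∨
  (a.2 = b.2 ∧ (a.1.1 + 1 = b.1.1 ∨ b.1.1 + 1 = a.1.1))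

/-- The chords `x_i x_{2k-i+1}` of the parity handle. -/
def handleChord (k : ℕ) (e : Sym2 (Fin k × Fin (4 * k))) : Prop :=
  ∃ i : Fin k, e = s(xvtx k ⟨i.1, by have := i.2; omega⟩,
    xvtx k ⟨2 * k - 1 - i.1, by have := i.2; omega⟩)

/-- The chords `x_{2i-1} x_{2i}` of the parity vortex. -/
def vortexChord (k : ℕ) (e : Sym2 (Fin k × Fin (4 * k))) : Prop :=
  ∃ i : Fin k, e = s(xvtx k ⟨2 * i.1, by have := i.2; omega⟩,
    xvtx k ⟨2 * i.1 + 1, by have := i.2; omega⟩)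

lemma xvtx_ne (k : ℕ) (i j : Fin (2 * k)) (h : i.1 ≠ j.1) : xvtx k i ≠ xvtx k j := by
  intro hc
  have := congrArg (fun p => p.2.1) hc
  simp only [xvtx] at this
  omega

/-- The unsigned, unrooted parity handle `H_k`. -/
def handleGraph (k : ℕ) : MGraph where
  V := Fin k × Fin (4 * k)
  E := {e : Sym2 (Fin k × Fin (4 * k)) //
    (∃ a b, cylAdj k a b ∧ e = s(a, b)) ∨ handleChord k e}
  finV := inferInstance
  finE := inferInstance
  ends := Subtype.val
  loopless := fun e he => by
    rcases e.2 with ⟨a, b, hab, h⟩ | ⟨i, h⟩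
    · rw [h, Sym2.mk_isDiag_iff] at he
      subst he
      have h1 := a.1.2
      have h2 := a.2.2
      rcases hab with ⟨_, h' | h' | ⟨h', h''⟩ | ⟨h', h''⟩⟩ | ⟨_, h' | h'⟩ <;> omega
    · rw [h, Sym2.mk_isDiag_iff] at he
      have := i.2
      exact xvtx_ne k _ _ (show (i.1 : ℕ) ≠ 2 * k - 1 - i.1 by omega) he

/-- The unsigned, unrooted parity vortex `V_k`. -/
def vortexGraph (k : ℕ) : MGraph where
  V := Fin k × Fin (4 * k)
  E := {e : Sym2 (Fin k × Fin (4 * k)) //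
    (∃ a b, cylAdj k a b ∧ e = s(a, b)) ∨ vortexChord k e}
  finV := inferInstance
  finE := inferInstance
  ends := Subtype.val
  loopless := fun e he => by
    rcases e.2 with ⟨a, b, hab, h⟩ | ⟨i, h⟩
    · rw [h, Sym2.mk_isDiag_iff] at he
      subst he
      have h1 := a.1.2
      have h2 := a.2.2
      rcases hab with ⟨_, h' | h' | ⟨h', h''⟩ | ⟨h', h''⟩⟩ | ⟨_, h' | h'⟩ <;> omega
    · rw [h, Sym2.mk_isDiag_iff] at he
      have := i.2
      exact xvtx_ne k _ _ (show (2 * i.1 : ℕ) ≠ 2 * i.1 + 1 by omega) he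

/-- The all-zero signing. -/
def γ₀ (G : MGraph) : G.E → ZMod 2 := fun _ => 0

/-- The all-one signing. -/
def γ₁ (G : MGraph) : G.E → ZMod 2 := fun _ => 1

/-! ## Matrices with two nonzero entries per row -/

/-- `A` has exactly two nonzero entries in every row. -/
def TwoNonzeroPerRow {m n : ℕ} (A : Matrix (Fin m) (Fin n) ℤ) : Prop :=
  ∀ i, {j | A i j ≠ 0}.ncard = 2

/-- The graph `G(A)` of a matrix with exactly two nonzero entries per row:
vertices are columns, edges are rows, each row joining its two nonzero columns. -/
noncomputable def matrixGraph {m n : ℕ} (A : Matrix (Fin m) (Fin n) ℤ)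
    (h : TwoNonzeroPerRow A) : MGraph where
  V := Fin n
  E := Fin m
  finV := inferInstance
  finE := inferInstance
  ends := fun i => s((Set.ncard_eq_two.mp (h i)).choose,
    (Set.ncard_eq_two.mp (h i)).choose_spec.choose)
  loopless := fun i hi => by
    rw [Sym2.mk_isDiag_iff] at hi
    exact (Set.ncard_eq_two.mp (h i)).choose_spec.choose_spec.1 hi

/-- The signing of `G(A)`: a row is even iff its two nonzero entries have
different signs (i.e. the product of its nonzero entries is negative). -/
def matrixSign {m n : ℕ} (A : Matrix (Fin m) (Fin n) ℤ) : Fin m → ZMod 2 :=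
  fun i => if (∏ j ∈ Finset.univ.filter (fun j => A i j ≠ 0), A i j) < 0 then 0 else 1

/-- The roots of `G⁺_•(A)`: columns containing an entry outside `{-1,0,1}`. -/
def matrixRoots {m n : ℕ} (A : Matrix (Fin m) (Fin n) ℤ) : Set (Fin n) :=
  {j | ∃ i, 1 < (A i j).natAbs}

/-- The TDM-treewidth of the rooted signed graph `G⁺_•(A)` associated to `A`. -/
noncomputable def matrixTDMtw {m n : ℕ} (A : Matrix (Fin m) (Fin n) ℤ)
    (h : TwoNonzeroPerRow A) : ℕ :=
  TDMtw (matrixGraph A h) (fun e => matrixSign A e) (fun j => matrixRoots A j)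

/-- The largest absolute value of an entry of `A`. -/
def maxAbsEntry {m n : ℕ} (A : Matrix (Fin m) (Fin n) ℤ) : ℕ :=
  Finset.sup Finset.univ fun i => Finset.sup Finset.univ fun j => (A i j).natAbs

/-- `A` is totally `Δ`-modular: every square subdeterminant has absolute value at
most `Δ`. -/
def TotallyDeltaModular {m n : ℕ} (A : Matrix (Fin m) (Fin n) ℤ) (Δ : ℕ) : Prop :=
  ∀ (s : ℕ) (r : Fin s → Fin m) (c : Fin s → Fin n),
    Function.Injective r → Function.Injective c →
    ((A.submatrix r c).det).natAbs ≤ Δ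

/-- The set of objective values of feasible points of the integer program
`max { wᵀx : Ax ≤ b, ℓ ≤ x ≤ u, x integral }`. -/
def IPvalues {m n : ℕ} (A : Matrix (Fin m) (Fin n) ℤ) (b : Fin m → ℤ)
    (w ℓ u : Fin n → ℤ) : Set ℤ :=
  {y | ∃ x : Fin n → ℤ, (∀ i, ∑ j, A i j * x j ≤ b i) ∧
    (∀ j, ℓ j ≤ x j ∧ x j ≤ u j) ∧ y = ∑ j, w j * x j}

/-- `o` solves the maximization problem over `S`: it is `none` iff `S` is
infeasible, and otherwise it is the maximum value. -/
def SolvesIP (o : Option ℤ) (S : Set ℤ) : Prop :=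
  (o = none ∧ S = ∅) ∨ ∃ y, o = some y ∧ IsGreatest S y


lemma exists_pair {α : Type} (z : Sym2 α) : ∃ p : α × α, z = s(p.1, p.2) :=
  Sym2.ind (fun a b => ⟨(a, b), rfl⟩) z

/-- A chosen first endpoint of an edge. -/
noncomputable def MGraph.ep1 (G : MGraph) (e : G.E) : G.V :=
  (exists_pair (G.ends e)).choose.1

/-- A chosen second endpoint of an edge. -/
noncomputable def MGraph.ep2 (G : MGraph) (e : G.E) : G.V :=
  (exists_pair (G.ends e)).choose.2

lemma MGraph.ends_ep (G : MGraph) (e : G.E) : G.ends e = s(G.ep1 e, G.ep2 e) :=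
  (exists_pair (G.ends e)).choose_spec

lemma map_inl_not_isDiag {α β : Type} (z : Sym2 α) (hz : ¬ z.IsDiag) :
    ¬ (z.map (Sum.inl : α → α ⊕ β)).IsDiag := by
  induction z using Sym2.ind with
  | _ a b =>
    simp only [Sym2.map_pair_eq, Sym2.mk_isDiag_iff] at *
    exact fun h => hz (by injection h)

/-- The graph obtained from `(G,γ)` by subdividing every even edge exactly once. -/
noncomputable def subdivideEven (G : MGraph) (γ : G.E → ZMod 2) : MGraph where
  V := G.V ⊕ {e : G.E // γ e = 0}
  E := {e : G.E // γ e ≠ 0} ⊕ ({e : G.E // γ e = 0} × Bool)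
  finV := inferInstance
  finE := inferInstance
  ends := fun x =>
    match x with
    | .inl e => (G.ends e.1).map .inl
    | .inr (e, b) => s(.inr e, .inl (if b then G.ep1 e.1 else G.ep2 e.1))
  loopless := fun x => by
    match x with
    | .inl e => exact map_inl_not_isDiag _ (G.loopless e.1)
    | .inr (e, b) =>
      rw [Sym2.mk_isDiag_iff]
      simp

/-- Minimum degree at least `d` (each vertex is incident to at least `d` edges). -/
def minDegreeGE (G : MGraph) (d : ℕ) : Prop :=
  ∀ v : G.V, d ≤ {e : G.E | v ∈ G.ends e}.ncard

/-- The `j`-th vertex of the subdividing path: `u`, then `ℓ` new internal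
vertices, then `v`. -/
def pathVert {α : Type} (u v : α) (ℓ : ℕ) (j : Fin (ℓ + 2)) : α ⊕ Fin ℓ :=
  if h0 : j.1 = 0 then .inl u
  else if h1 : j.1 = ℓ + 1 then .inl v
  else .inr ⟨j.1 - 1, by have := j.2; omega⟩

/-- The graph obtained from `G` by replacing the edge `e₀` (with ends `u,v`) by a
path with `ℓ` internal vertices (hence `ℓ + 1` edges). -/
def replaceEdge (G : MGraph) (e₀ : G.E) (u v : G.V) (h : G.ends e₀ = s(u, v))
    (ℓ : ℕ) : MGraph where
  V := G.V ⊕ Fin ℓ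
  E := {e : G.E // e ≠ e₀} ⊕ Fin (ℓ + 1)
  finV := inferInstance
  finE := inferInstance
  ends := fun x =>
    match x with
    | .inl e => (G.ends e.1).map .inl
    | .inr i => s(pathVert u v ℓ ⟨i.1, by have := i.2; omega⟩,
        pathVert u v ℓ ⟨i.1 + 1, by have := i.2; omega⟩)
  loopless := fun x => by
    match x with
    | .inl e => exact map_inl_not_isDiag _ (G.loopless e.1)
    | .inr i =>
      rw [Sym2.mk_isDiag_iff]
      have huv : u ≠ v := by
        intro hc
        exact G.loopless e₀ (by rw [h, hc]; simp)
      have hi := i.2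
      simp only [pathVert]
      split_ifs <;> (simp_all; try omega)

/-- The signing of `replaceEdge`: old edges keep their sign, the `i`-th path edge
gets sign `δ i`. -/
def replaceGamma {G : MGraph} {e₀ : G.E} {u v : G.V} {h : G.ends e₀ = s(u, v)}
    {ℓ : ℕ} (γ : G.E → ZMod 2) (δ : Fin (ℓ + 1) → ZMod 2) :
    (replaceEdge G e₀ u v h ℓ).E → ZMod 2 :=
  fun x => match x with
  | .inl e => γ e.1
  | .inr i => δ i


/-! ### Auxiliary lemmas for statement 6 -/

section Stmt6Aux

lemma zmod2_ne_iff {a b : ZMod 2} : a ≠ b ↔ a + b = 1 := by revert a b; decide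

lemma zmod2_eq_iff {a b : ZMod 2} : a = b ↔ a + b = 0 := by revert a b; decide

lemma zmod2_eq_of_ne_ne {a b c : ZMod 2} (h1 : a ≠ c) (h2 : b ≠ c) : a = b := by
  revert a b c; decide

lemma zmod2_eq_one {a : ZMod 2} (h : a ≠ 0) : a = 1 := by revert a; decide

lemma zmod2_sol00 {a b : ZMod 2} (h : (0:ZMod 2) = 0 + a + b) : a = b := by
  revert a b; decide

lemma zmod2_sol01 {a b : ZMod 2} (h : (0:ZMod 2) = 1 + a + b) : a ≠ b := by
  revert a b; decide

lemma zmod2_sol10 {a b : ZMod 2} (h : (1:ZMod 2) = 0 + a + b) : b + 1 = a := by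
  revert a b; decide

lemma zmod2_sol11 {a b : ZMod 2} (h : (1:ZMod 2) = 1 + a + b) : a = b := by
  revert a b; decide

lemma zmod2_ne_add_one (a : ZMod 2) : a ≠ a + 1 := by revert a; decide

lemma zmod2_add_one_ne (a : ZMod 2) : a + 1 ≠ a := by revert a; decide

variable {G : MGraph} {γ : G.E → ZMod 2}

lemma subdiv_ends_inl (e : {e : G.E // γ e ≠ 0}) :
    (subdivideEven G γ).ends (Sum.inl e) =
      s(Sum.inl (G.ep1 e.1), Sum.inl (G.ep2 e.1)) := by
  show (G.ends e.1).map Sum.inl = _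
  rw [G.ends_ep e.1, Sym2.map_pair_eq]

lemma subdiv_ends_inr (e : {e : G.E // γ e = 0}) (b : Bool) :
    (subdivideEven G γ).ends (Sum.inr (e, b)) =
      s(Sum.inr e, Sum.inl (if b then G.ep1 e.1 else G.ep2 e.1)) := rfl

/-- Classification of edges of the subdivision incident to a subdivision vertex. -/
lemma subdiv_edge_at_inr (f : (subdivideEven G γ).E) (e : {e : G.E // γ e = 0})
    (z : (subdivideEven G γ).V)
    (h : (subdivideEven G γ).ends f = s(Sum.inr e, z)) :
    ∃ b : Bool, f = Sum.inr (e, b) ∧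
      z = Sum.inl (if b then G.ep1 e.1 else G.ep2 e.1) := by
  match f with
  | .inl e' =>
    rw [subdiv_ends_inl] at h
    replace h := Sym2.eq_iff.mp h
    rcases h with ⟨h, -⟩ | ⟨-, h⟩ <;> exact absurd h (by simp)
  | .inr (e', b) =>
    rw [subdiv_ends_inr] at h
    replace h := Sym2.eq_iff.mp h
    rcases h with ⟨h1, h2⟩ | ⟨-, h2⟩
    · obtain rfl : e' = e := by injection h1
      exact ⟨b, rfl, h2.symm⟩
    · exact absurd h2 (by simp)

/-- Classification of edges of the subdivision joining two original vertices. -/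
lemma subdiv_edge_inl_inl (f : (subdivideEven G γ).E) (x y : G.V)
    (h : (subdivideEven G γ).ends f = s(Sum.inl x, Sum.inl y)) :
    ∃ e : {e : G.E // γ e ≠ 0}, f = Sum.inl e ∧ G.ends e.1 = s(x, y) := by
  match f with
  | .inl e' =>
    refine ⟨e', rfl, ?_⟩
    rw [subdiv_ends_inl] at h
    replace h := Sym2.eq_iff.mp h
    rw [G.ends_ep e'.1]
    rcases h with ⟨h1, h2⟩ | ⟨h1, h2⟩
    · obtain rfl : G.ep1 e'.1 = x := by injection h1
      obtain rfl : G.ep2 e'.1 = y := by injection h2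
      rfl
    · obtain rfl : G.ep1 e'.1 = y := by injection h1
      obtain rfl : G.ep2 e'.1 = x := by injection h2
      exact Sym2.eq_swap
  | .inr (e', b) =>
    rw [subdiv_ends_inr] at h
    replace h := Sym2.eq_iff.mp h
    rcases h with ⟨h1, -⟩ | ⟨h1, -⟩ <;> exact absurd h1 (by simp)

end Stmt6Aux

/-- For `H` of minimum degree 3: `(G,γ)` contains `(H,γ₁)` as a
signed graph minor iff the graph `G'` obtained from `G` by subdividing every even
edge once contains `H` as an odd-minor. -/
theorem statement_6 (H : MGraph) (hH : minDegreeGE H 3) (G : MGraph)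
    (γ : G.E → ZMod 2) :
    IsSignedMinor H (γ₁ H) G γ ↔ IsOddMinor H (subdivideEven G γ) := by
  classical
  constructor
  · rintro ⟨M⟩
    obtain ⟨σ, hσ⟩ := M.shift
    have hpar : ∀ e, M.γ' e = γ e + σ (G.ep1 e) + σ (G.ep2 e) :=
      fun e => hσ e _ _ (G.ends_ep e)
    let col : (subdivideEven G γ).V → ZMod 2 :=
      Sum.elim σ (fun e => σ (G.ep2 e.1) + 1)
    let bs' : H.V → Set (subdivideEven G γ).V := fun w =>
      Sum.elim (fun x => x ∈ M.bs w) (fun e => G.ep2 e.1 ∈ M.bs w)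
    let em' : H.E → (subdivideEven G γ).E := fun eH =>
      if h : γ (M.em eH) = 0 then Sum.inr (⟨M.em eH, h⟩, true)
      else Sum.inl ⟨M.em eH, h⟩
    let R' : H.V → (subdivideEven G γ).V → (subdivideEven G γ).V → Prop :=
      fun w x y => x ∈ bs' w ∧ y ∈ bs' w ∧ col x ≠ col y ∧
        ∃ e, (subdivideEven G γ).ends e = s(x, y)
    -- single connection step lifted to the subdivision
    have S1 : ∀ (w : H.V) (x y : G.V), x ∈ M.bs w → y ∈ M.bs w →
        ∀ e, M.γ' e = 0 → G.ends e = s(x, y) →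
        Relation.ReflTransGen (R' w) (Sum.inl x) (Sum.inl y) := by
      intro w x y hx hy e he0 hends
      have h1 := hσ e x y hends
      rw [he0] at h1
      have heq : s(G.ep1 e, G.ep2 e) = s(x, y) := (G.ends_ep e).symm.trans hends
      rw [Sym2.eq_iff] at heq
      by_cases hge : γ e = 0
      · -- two steps through the subdivision vertex
        rw [hge] at h1
        have hxy : σ x = σ y := zmod2_sol00 h1
        rcases heq with ⟨h2, h3⟩ | ⟨h2, h3⟩
        · -- ep1 = x, ep2 = y
          have hmem : Sum.inr (⟨e, hge⟩ : {e : G.E // γ e = 0}) ∈ bs' w := by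
            show G.ep2 e ∈ M.bs w; rw [h3]; exact hy
          refine Relation.ReflTransGen.head (b := Sum.inr (⟨e, hge⟩ : {e : G.E // γ e = 0})) ?_ (Relation.ReflTransGen.single ?_)
          · refine ⟨hx, hmem, ?_, ⟨Sum.inr (⟨e, hge⟩, true), ?_⟩⟩
            · show σ x ≠ σ (G.ep2 e) + 1
              rw [h3, ← hxy]; exact zmod2_ne_add_one _
            · rw [subdiv_ends_inr]; rw [if_pos rfl]
              rw [h2]; exact Sym2.eq_swap
          · refine ⟨hmem, hy, ?_, ⟨Sum.inr (⟨e, hge⟩, false), ?_⟩⟩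
            · show σ (G.ep2 e) + 1 ≠ σ y
              rw [h3]; exact zmod2_add_one_ne _
            · rw [subdiv_ends_inr]; rw [if_neg (by simp : ¬ (false = true))]
              rw [h3]; rfl
        · -- ep1 = y, ep2 = x
          have hmem : Sum.inr (⟨e, hge⟩ : {e : G.E // γ e = 0}) ∈ bs' w := by
            show G.ep2 e ∈ M.bs w; rw [h3]; exact hx
          refine Relation.ReflTransGen.head (b := Sum.inr (⟨e, hge⟩ : {e : G.E // γ e = 0})) ?_ (Relation.ReflTransGen.single ?_)
          · refine ⟨hx, hmem, ?_, ⟨Sum.inr (⟨e, hge⟩, false), ?_⟩⟩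
            · show σ x ≠ σ (G.ep2 e) + 1
              rw [h3]; exact zmod2_ne_add_one _
            · rw [subdiv_ends_inr]; rw [if_neg (by simp : ¬ (false = true))]
              rw [h3]; exact Sym2.eq_swap
          · refine ⟨hmem, hy, ?_, ⟨Sum.inr (⟨e, hge⟩, true), ?_⟩⟩
            · show σ (G.ep2 e) + 1 ≠ σ y
              rw [h3, hxy]; exact zmod2_add_one_ne _
            · rw [subdiv_ends_inr]; rw [if_pos rfl]
              rw [h2]; rfl
      · -- single odd edge
        rw [zmod2_eq_one hge] at h1
        refine Relation.ReflTransGen.single ⟨hx, hy, zmod2_sol01 h1, ⟨Sum.inl ⟨e, hge⟩, ?_⟩⟩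
        show (G.ends e).map Sum.inl = _
        rw [hends, Sym2.map_pair_eq]; rfl
    have S2 : ∀ (w : H.V) (x y : G.V),
        Relation.ReflTransGen
          (fun p q => p ∈ M.bs w ∧ q ∈ M.bs w ∧
            ∃ e, M.γ' e = 0 ∧ G.ends e = s(p, q)) x y →
        Relation.ReflTransGen (R' w) (Sum.inl x) (Sum.inl y) := by
      intro w x y h
      induction h with
      | refl => exact .refl
      | tail _ hstep ih =>
        obtain ⟨hp, hq, e, he0, hends⟩ := hstep
        exact ih.trans (S1 w _ _ hp hq e he0 hends)
    -- every vertex of a branch set connects down to an original vertex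
    have down : ∀ (w : H.V) (z : (subdivideEven G γ).V), z ∈ bs' w →
        ∃ x : G.V, x ∈ M.bs w ∧
          Relation.ReflTransGen (R' w) z (Sum.inl x) ∧
          Relation.ReflTransGen (R' w) (Sum.inl x) z := by
      intro w z hz
      match z with
      | .inl x => exact ⟨x, hz, .refl, .refl⟩
      | .inr e =>
        have hz' : G.ep2 e.1 ∈ M.bs w := hz
        have hcol : (σ (G.ep2 e.1) + 1 : ZMod 2) ≠ σ (G.ep2 e.1) :=
          zmod2_add_one_ne _
        refine ⟨G.ep2 e.1, hz', Relation.ReflTransGen.single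
          ⟨hz, hz', hcol, ⟨Sum.inr (e, false), ?_⟩⟩,
          Relation.ReflTransGen.single
          ⟨hz', hz, fun h => hcol h.symm, ⟨Sum.inr (e, false), ?_⟩⟩⟩
        · rw [subdiv_ends_inr]; rw [if_neg (by simp : ¬ (false = true))]; rfl
        · rw [subdiv_ends_inr]; rw [if_neg (by simp : ¬ (false = true))]; exact Sym2.eq_swap
    have hund : ∀ eH,
        (Sum.elim (fun e => e.1) (fun p => p.1.1) (em' eH) : G.E) = M.em eH := by
      intro eH
      by_cases h : γ (M.em eH) = 0 <;> simp [em', h]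
    refine ⟨⟨bs', em', col, ?_, ?_, ?_, ?_, ?_, ?_⟩⟩
    · -- nonempty
      intro v
      obtain ⟨x, hx⟩ := M.bs_nonempty v
      exact ⟨Sum.inl x, hx⟩
    · -- disjoint
      intro u v huv
      rw [Set.disjoint_left]
      intro z hzu hzv
      match z with
      | .inl x => exact (M.bs_disjoint u v huv).ne_of_mem hzu hzv rfl
      | .inr e => exact (M.bs_disjoint u v huv).ne_of_mem hzu hzv rfl
    · -- connected
      intro v a ha b hb
      obtain ⟨x, hx, hax, _⟩ := down v a ha
      obtain ⟨y, hy, _, hyb⟩ := down v b hb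
      exact (hax.trans (S2 v x y (M.bs_connected v x hx y hy))).trans hyb
    · -- em injective
      intro e1 e2 h
      apply M.em_inj
      rw [← hund e1, ← hund e2, h]
    · -- em ends
      intro eH u v hends
      obtain ⟨a, ha, b, hb, hab⟩ := M.em_ends eH u v hends
      have hγ'1 : M.γ' (M.em eH) = 1 := M.em_parity eH
      by_cases hge : γ (M.em eH) = 0
      · have hem : em' eH = Sum.inr (⟨M.em eH, hge⟩, true) := dif_pos hge
        have heq : s(G.ep1 (M.em eH), G.ep2 (M.em eH)) = s(a, b) :=
          (G.ends_ep _).symm.trans hab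
        rw [Sym2.eq_iff] at heq
        rcases heq with ⟨h2, h3⟩ | ⟨h2, h3⟩
        · -- ep1 = a ∈ bs u, ep2 = b ∈ bs v
          refine ⟨Sum.inl a, ha, Sum.inr ⟨M.em eH, hge⟩, ?_, ?_⟩
          · show G.ep2 (M.em eH) ∈ M.bs v; rw [h3]; exact hb
          · rw [hem, subdiv_ends_inr]; rw [if_pos rfl]
            rw [h2]; exact Sym2.eq_swap
        · -- ep1 = b ∈ bs v, ep2 = a ∈ bs u
          refine ⟨Sum.inr ⟨M.em eH, hge⟩, ?_, Sum.inl b, hb, ?_⟩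
          · show G.ep2 (M.em eH) ∈ M.bs u; rw [h3]; exact ha
          · rw [hem, subdiv_ends_inr]; rw [if_pos rfl]
            rw [h2]; rfl
      · have hem : em' eH = Sum.inl ⟨M.em eH, hge⟩ := dif_neg hge
        refine ⟨Sum.inl a, ha, Sum.inl b, hb, ?_⟩
        rw [hem]
        show (G.ends (M.em eH)).map Sum.inl = _
        rw [hab, Sym2.map_pair_eq]; rfl
    · -- em mono
      intro eH u v h
      have hγ'1 : M.γ' (M.em eH) = 1 := M.em_parity eH
      have h1 := hpar (M.em eH)
      rw [hγ'1] at h1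
      by_cases hge : γ (M.em eH) = 0
      · have hem : em' eH = Sum.inr (⟨M.em eH, hge⟩, true) := dif_pos hge
        rw [hem, subdiv_ends_inr] at h
        rw [if_pos rfl] at h
        rw [hge] at h1
        have hcc : σ (G.ep2 (M.em eH)) + 1 = σ (G.ep1 (M.em eH)) := zmod2_sol10 h1
        replace h := Sym2.eq_iff.mp h
        rcases h with ⟨h2, h3⟩ | ⟨h2, h3⟩ <;> subst h2 <;> subst h3
        · exact hcc
        · exact hcc.symm
      · have hem : em' eH = Sum.inl ⟨M.em eH, hge⟩ := dif_neg hge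
        rw [hem, subdiv_ends_inl] at h
        rw [zmod2_eq_one hge] at h1
        have hcc : σ (G.ep1 (M.em eH)) = σ (G.ep2 (M.em eH)) := zmod2_sol11 h1
        replace h := Sym2.eq_iff.mp h
        rcases h with ⟨h2, h3⟩ | ⟨h2, h3⟩ <;> subst h2 <;> subst h3
        · exact hcc
        · exact hcc.symm
  · rintro ⟨M⟩
    let σ : G.V → ZMod 2 := fun v => M.col (Sum.inl v)
    let γ' : G.E → ZMod 2 := fun e => γ e + σ (G.ep1 e) + σ (G.ep2 e)
    let bsG : H.V → Set G.V := fun v => {x | Sum.inl x ∈ M.bs v}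
    let emG : H.E → G.E := fun eH => Sum.elim (fun e => e.1) (fun p => p.1.1) (M.em eH)
    have hγ'val : ∀ (e : G.E) (x y : G.V), G.ends e = s(x, y) →
        γ' e = γ e + σ x + σ y := by
      intro e x y h
      have heq := (G.ends_ep e).symm.trans h
      rw [Sym2.eq_iff] at heq
      show γ e + σ (G.ep1 e) + σ (G.ep2 e) = _
      rcases heq with ⟨h1, h2⟩ | ⟨h1, h2⟩ <;> rw [h1, h2] <;> ring
    have hmem_edge : ∀ (eH : H.E) (v : H.V), v ∈ H.ends eH →
        ∃ a ∈ M.bs v, a ∈ (subdivideEven G γ).ends (M.em eH) := by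
      intro eH v hv
      obtain ⟨w, hw⟩ := Sym2.mem_iff_exists.mp hv
      obtain ⟨a, ha, b, hb, hab⟩ := M.em_ends eH v w hw
      exact ⟨a, ha, by rw [hab]; exact Sym2.mem_mk_left _ _⟩
    -- every branch set contains an original vertex
    have L_inl : ∀ v : H.V, ∃ x : G.V, Sum.inl x ∈ M.bs v := by
      intro v
      by_contra hno
      push_neg at hno
      obtain ⟨z0, hz0⟩ := M.bs_nonempty v
      obtain ⟨e0, rfl⟩ : ∃ e0, z0 = Sum.inr e0 := by
        match z0 with
        | .inl x => exact absurd hz0 (hno x)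
        | .inr e0 => exact ⟨e0, rfl⟩
      have hsub : ∀ z ∈ M.bs v, z = Sum.inr e0 := by
        intro z hz
        have hconn := M.bs_connected v _ hz0 _ hz
        clear hz
        induction hconn with
        | refl => rfl
        | tail hsteps hstep ih =>
          subst ih
          obtain ⟨-, hc, -, f, hf⟩ := hstep
          obtain ⟨bb, -, rfl⟩ := subdiv_edge_at_inr f e0 _ hf
          exact absurd hc (hno _)
      have key : ∀ eH ∈ {eH : H.E | v ∈ H.ends eH},
          ∃ b : Bool, M.em eH = Sum.inr (e0, b) := by
        intro eH h
        obtain ⟨a, ha, hmem⟩ := hmem_edge eH v h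
        have ha' := hsub a ha
        subst ha'
        cases hEm : M.em eH with
        | inl e' =>
          rw [hEm, subdiv_ends_inl] at hmem
          replace hmem := Sym2.mem_iff.mp hmem
          rcases hmem with h' | h' <;> exact absurd h' (by simp)
        | inr p =>
          obtain ⟨e', b⟩ := p
          rw [hEm, subdiv_ends_inr] at hmem
          replace hmem := Sym2.mem_iff.mp hmem
          rcases hmem with h' | h'
          · obtain rfl : e0 = e' := by injection h'
            exact ⟨b, rfl⟩
          · exact absurd h' (by simp)
      classical
      set f : H.E → Bool := fun eH =>
        if h : eH ∈ {eH : H.E | v ∈ H.ends eH} then (key eH h).choose else true with hfdef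
      have hinj : Set.InjOn f {eH : H.E | v ∈ H.ends eH} := by
        intro e1 h1 e2 h2 hfe
        apply M.em_inj
        rw [(key e1 h1).choose_spec, (key e2 h2).choose_spec]
        simp only [hfdef, dif_pos h1, dif_pos h2] at hfe
        rw [hfe]
      have hcard := Set.ncard_le_ncard_of_injOn f
        (fun a _ => Set.mem_univ (f a)) hinj Set.finite_univ
      have h2 : (Set.univ : Set Bool).ncard = 2 := by
        simp [Set.ncard_univ, Nat.card_eq_fintype_card]
      have h3 := hH v
      omega
    -- first step out of a subdivision vertex inside a branch set
    have L2 : ∀ (v : H.V) (e : {e : G.E // γ e = 0}), Sum.inr e ∈ M.bs v →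
        ∃ x : G.V, Sum.inl x ∈ M.bs v ∧ (x = G.ep1 e.1 ∨ x = G.ep2 e.1) ∧
          M.col (Sum.inl x) ≠ M.col (Sum.inr e) := by
      intro v e he
      obtain ⟨z, hz⟩ := L_inl v
      have hconn := M.bs_connected v _ he _ hz
      rcases hconn.cases_head with heq | ⟨c, hstep, -⟩
      · exact absurd heq (by simp)
      · obtain ⟨-, hc, hcol, f, hf⟩ := hstep
        obtain ⟨bb, -, hc'⟩ := subdiv_edge_at_inr f e c hf
        cases bb with
        | false =>
          rw [if_neg (by simp : ¬ (false = true))] at hc'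
          subst hc'
          exact ⟨G.ep2 e.1, hc, Or.inr rfl, fun h => hcol h.symm⟩
        | true =>
          rw [if_pos rfl] at hc'
          subst hc'
          exact ⟨G.ep1 e.1, hc, Or.inl rfl, fun h => hcol h.symm⟩
    -- parity of subdivision model edges
    have Lpar : ∀ (eH : H.E) (e : {e : G.E // γ e = 0}) (b : Bool),
        M.em eH = Sum.inr (e, b) →
        σ (G.ep1 e.1) ≠ σ (G.ep2 e.1) ∧
          M.col (Sum.inr e) = σ (if b then G.ep1 e.1 else G.ep2 e.1) := by
      intro eH e b hEm
      have hcol : M.col (Sum.inr e) = σ (if b then G.ep1 e.1 else G.ep2 e.1) :=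
        M.em_mono eH (Sum.inr e) (Sum.inl (if b then G.ep1 e.1 else G.ep2 e.1))
          (by rw [hEm]; exact subdiv_ends_inr e b)
      refine ⟨?_, hcol⟩
      obtain ⟨a, ha, b', hb', hab⟩ := M.em_ends eH (H.ep1 eH) (H.ep2 eH) (H.ends_ep eH)
      rw [hEm, subdiv_ends_inr] at hab
      replace hab := Sym2.eq_iff.mp hab
      have hin : Sum.inr e ∈ M.bs (H.ep1 eH) ∨ Sum.inr e ∈ M.bs (H.ep2 eH) := by
        rcases hab with ⟨h1, -⟩ | ⟨h1, -⟩
        · exact Or.inl (by rw [h1]; exact ha)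
        · exact Or.inr (by rw [h1]; exact hb')
      obtain ⟨x, hxor, hxcol⟩ : ∃ x, (x = G.ep1 e.1 ∨ x = G.ep2 e.1) ∧
          M.col (Sum.inl x) ≠ M.col (Sum.inr e) := by
        rcases hin with h | h <;>
        · obtain ⟨x, -, h2', h3'⟩ := L2 _ e h
          exact ⟨x, h2', h3'⟩
      rw [hcol] at hxcol
      cases b with
      | false =>
        rw [if_neg (by simp : ¬ (false = true))] at hxcol
        rcases hxor with rfl | rfl
        · exact hxcol
        · exact absurd rfl hxcol
      | true =>
        rw [if_pos rfl] at hxcol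
        rcases hxor with rfl | rfl
        · exact absurd rfl hxcol
        · exact fun h => hxcol h.symm
    -- parity of all model edges
    have hpar1 : ∀ eH, γ' (emG eH) = 1 := by
      intro eH
      cases hEm : M.em eH with
      | inl e =>
        have hE : emG eH = e.1 := by simp [emG, hEm]
        have hmono : σ (G.ep1 e.1) = σ (G.ep2 e.1) :=
          M.em_mono eH (Sum.inl (G.ep1 e.1)) (Sum.inl (G.ep2 e.1))
            (by rw [hEm]; exact subdiv_ends_inl e)
        rw [hE]
        show γ e.1 + σ (G.ep1 e.1) + σ (G.ep2 e.1) = 1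
        rw [zmod2_eq_one e.2, add_assoc, zmod2_eq_iff.mp hmono, add_zero]
      | inr p =>
        obtain ⟨e, bb⟩ := p
        have hE : emG eH = e.1 := by simp [emG, hEm]
        obtain ⟨hne, -⟩ := Lpar eH e bb hEm
        rw [hE]
        show γ e.1 + σ (G.ep1 e.1) + σ (G.ep2 e.1) = 1
        rw [e.2, zero_add]
        exact zmod2_ne_iff.mp hne
    refine ⟨⟨γ', ⟨σ, fun e u v h => hγ'val e u v h⟩, bsG, emG, ?_, ?_, ?_, ?_, ?_, hpar1⟩⟩
    · -- nonempty
      intro v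
      obtain ⟨x, hx⟩ := L_inl v
      exact ⟨x, hx⟩
    · -- disjoint
      intro u v huv
      rw [Set.disjoint_left]
      intro x hxu hxv
      exact (M.bs_disjoint u v huv).ne_of_mem hxu hxv rfl
    · -- connected
      intro v a ha b₀ hb
      let RG : G.V → G.V → Prop := fun x y => x ∈ bsG v ∧ y ∈ bsG v ∧
        ∃ e, γ' e = 0 ∧ G.ends e = s(x, y)
      have main : ∀ w, Relation.ReflTransGen
          (fun x y => x ∈ M.bs v ∧ y ∈ M.bs v ∧ M.col x ≠ M.col y ∧
            ∃ e, (subdivideEven G γ).ends e = s(x, y)) (Sum.inl a) w →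
          (∀ y : G.V, w = Sum.inl y →
            Sum.inl y ∈ M.bs v ∧ Relation.ReflTransGen RG a y) ∧
          (∀ e : {e : G.E // γ e = 0}, w = Sum.inr e →
            ∃ x : G.V, (x = G.ep1 e.1 ∨ x = G.ep2 e.1) ∧ Sum.inl x ∈ M.bs v ∧
              Relation.ReflTransGen RG a x ∧
              M.col (Sum.inl x) ≠ M.col (Sum.inr e)) := by
        intro w h
        induction h with
        | refl =>
          refine ⟨fun y hy => ?_, fun e he => absurd he (by simp)⟩
          obtain rfl : a = y := by injection hy
          exact ⟨ha, .refl⟩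
        | tail hsteps hstep ih =>
          rename_i p q
          obtain ⟨hp, hq, hcol, f, hf⟩ := hstep
          cases q with
          | inl y =>
            refine ⟨fun y' hy' => ?_, fun e he => absurd he (by simp)⟩
            obtain rfl : y = y' := by injection hy'
            cases p with
            | inl x =>
              obtain ⟨e, rfl, hends⟩ := subdiv_edge_inl_inl f x y hf
              obtain ⟨hmx, hrtg⟩ := ih.1 x rfl
              have hne : σ x ≠ σ y := hcol
              have hsum : σ x + σ y = 1 := zmod2_ne_iff.mp hne
              have hγ0 : γ' e.1 = 0 := by
                rw [hγ'val e.1 x y hends, zmod2_eq_one e.2, add_assoc, hsum]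
                decide
              exact ⟨hq, hrtg.tail ⟨hmx, hq, e.1, hγ0, hends⟩⟩
            | inr e =>
              obtain ⟨x, hxor, hmx, hrtg, hxcol⟩ := ih.2 e rfl
              obtain ⟨bb, -, hz⟩ := subdiv_edge_at_inr f e _ hf
              have hyor : y = G.ep1 e.1 ∨ y = G.ep2 e.1 := by
                cases bb
                · rw [if_neg (by simp : ¬ (false = true))] at hz
                  exact Or.inr (by injection hz)
                · rw [if_pos rfl] at hz
                  exact Or.inl (by injection hz)
              by_cases hxy : x = y
              · subst hxy
                exact ⟨hq, hrtg⟩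
              · have hycol : M.col (Sum.inl y) ≠ M.col (Sum.inr e) :=
                  fun h => hcol h.symm
                have hσxy : σ x = σ y := zmod2_eq_of_ne_ne hxcol hycol
                have hends : G.ends e.1 = s(x, y) := by
                  rw [G.ends_ep e.1]
                  rcases hxor with rfl | rfl <;> rcases hyor with rfl | rfl
                  · exact absurd rfl hxy
                  · rfl
                  · exact Sym2.eq_swap
                  · exact absurd rfl hxy
                have hγ0 : γ' e.1 = 0 := by
                  rw [hγ'val e.1 x y hends, e.2, zero_add]
                  exact zmod2_eq_iff.mp hσxy
                exact ⟨hq, hrtg.tail ⟨hmx, hq, e.1, hγ0, hends⟩⟩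
          | inr e =>
            refine ⟨fun y hy => absurd hy (by simp), fun e' he' => ?_⟩
            obtain rfl : e = e' := by injection he'
            cases p with
            | inl x =>
              obtain ⟨bb, -, hz⟩ := subdiv_edge_at_inr f e _ (hf.trans Sym2.eq_swap)
              obtain ⟨hmx, hrtg⟩ := ih.1 x rfl
              have hxor : x = G.ep1 e.1 ∨ x = G.ep2 e.1 := by
                cases bb
                · rw [if_neg (by simp : ¬ (false = true))] at hz
                  exact Or.inr (by injection hz)
                · rw [if_pos rfl] at hz
                  exact Or.inl (by injection hz)
              exact ⟨x, hxor, hp, hrtg, hcol⟩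
            | inr e'' =>
              obtain ⟨bb, -, hz⟩ := subdiv_edge_at_inr f e'' _ hf
              exact absurd hz (by simp)
      exact ((main (Sum.inl b₀) (M.bs_connected v _ ha _ hb)).1 b₀ rfl).2
    · -- em injective
      intro e1 e2 h12
      apply M.em_inj
      cases h1 : M.em e1 with
      | inl a1 =>
        cases h2 : M.em e2 with
        | inl a2 =>
          have hv : a1.1 = a2.1 := by simpa [emG, h1, h2] using h12
          exact congrArg Sum.inl (Subtype.ext hv)
        | inr p2 =>
          obtain ⟨a2, b2⟩ := p2
          have hv : a1.1 = a2.1 := by simpa [emG, h1, h2] using h12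
          exact absurd (by rw [hv]; exact a2.2) a1.2
      | inr p1 =>
        obtain ⟨a1, b1⟩ := p1
        cases h2 : M.em e2 with
        | inl a2 =>
          have hv : a1.1 = a2.1 := by simpa [emG, h1, h2] using h12
          exact absurd (by rw [← hv]; exact a1.2) a2.2
        | inr p2 =>
          obtain ⟨a2, b2⟩ := p2
          have hv : a1.1 = a2.1 := by simpa [emG, h1, h2] using h12
          have ha : a1 = a2 := Subtype.ext hv
          subst ha
          by_cases hb : b1 = b2
          · rw [hb]
          · obtain ⟨hne1, hcol1⟩ := Lpar e1 a1 b1 h1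
            obtain ⟨-, hcol2⟩ := Lpar e2 a1 b2 h2
            exfalso
            cases b1 <;> cases b2 <;> simp_all
    · -- em ends
      intro eH u v hends
      obtain ⟨a, ha, b', hb', hab⟩ := M.em_ends eH u v hends
      cases hEm : M.em eH with
      | inl e =>
        have hE : emG eH = e.1 := by simp [emG, hEm]
        rw [hEm, subdiv_ends_inl] at hab
        replace hab := Sym2.eq_iff.mp hab
        rcases hab with ⟨h1, h2⟩ | ⟨h1, h2⟩
        · refine ⟨G.ep1 e.1, ?_, G.ep2 e.1, ?_, ?_⟩
          · show Sum.inl (G.ep1 e.1) ∈ M.bs u; rw [h1]; exact ha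
          · show Sum.inl (G.ep2 e.1) ∈ M.bs v; rw [h2]; exact hb'
          · rw [hE]; exact G.ends_ep e.1
        · refine ⟨G.ep2 e.1, ?_, G.ep1 e.1, ?_, ?_⟩
          · show Sum.inl (G.ep2 e.1) ∈ M.bs u; rw [h2]; exact ha
          · show Sum.inl (G.ep1 e.1) ∈ M.bs v; rw [h1]; exact hb'
          · rw [hE]; exact (G.ends_ep e.1).trans Sym2.eq_swap
      | inr p =>
        obtain ⟨e, bb⟩ := p
        have hE : emG eH = e.1 := by simp [emG, hEm]
        obtain ⟨-, hcolr⟩ := Lpar eH e bb hEm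
        rw [hEm, subdiv_ends_inr] at hab
        replace hab := Sym2.eq_iff.mp hab
        rcases hab with ⟨h1, h2⟩ | ⟨h1, h2⟩
        · -- inr e = a ∈ bs u
          obtain ⟨x, hx, hxor, hxcol⟩ := L2 u e (by rw [h1]; exact ha)
          rw [hcolr] at hxcol
          cases bb with
          | false =>
            rw [if_neg (by simp : ¬ (false = true))] at hxcol h2
            rcases hxor with rfl | rfl
            · refine ⟨G.ep1 e.1, hx, G.ep2 e.1, ?_, by rw [hE]; exact G.ends_ep e.1⟩
              show Sum.inl (G.ep2 e.1) ∈ M.bs v; rw [h2]; exact hb'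
            · exact absurd rfl hxcol
          | true =>
            rw [if_pos rfl] at hxcol h2
            rcases hxor with rfl | rfl
            · exact absurd rfl hxcol
            · refine ⟨G.ep2 e.1, hx, G.ep1 e.1, ?_, ?_⟩
              · show Sum.inl (G.ep1 e.1) ∈ M.bs v; rw [h2]; exact hb'
              · rw [hE]; exact (G.ends_ep e.1).trans Sym2.eq_swap
        · -- inr e = b' ∈ bs v
          obtain ⟨x, hx, hxor, hxcol⟩ := L2 v e (by rw [h1]; exact hb')
          rw [hcolr] at hxcol
          cases bb with
          | false =>
            rw [if_neg (by simp : ¬ (false = true))] at hxcol h2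
            rcases hxor with rfl | rfl
            · refine ⟨G.ep2 e.1, ?_, G.ep1 e.1, hx, ?_⟩
              · show Sum.inl (G.ep2 e.1) ∈ M.bs u; rw [h2]; exact ha
              · rw [hE]; exact (G.ends_ep e.1).trans Sym2.eq_swap
            · exact absurd rfl hxcol
          | true =>
            rw [if_pos rfl] at hxcol h2
            rcases hxor with rfl | rfl
            · exact absurd rfl hxcol
            · refine ⟨G.ep1 e.1, ?_, G.ep2 e.1, hx, by rw [hE]; exact G.ends_ep e.1⟩
              show Sum.inl (G.ep1 e.1) ∈ M.bs u; rw [h2]; exact ha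

end TDMPaper
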